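/- Let (X,≼) be a partial order admitting an injective monotone, let A ⊆ X be an antichain of ≼, and let ≼_A be a Debreu separable total order on A. Then there exists a Debreu separable total order ≼'' on X such that x ≼ y implies x ≼'' y for all x, y ∈ X, and a ≼_A b implies a ≼'' b for all a, b ∈ A. -/
import Mathlib


/-- A binary relation is a partial order: reflexive, antisymmetric, transitive. -/
def IsPartialOrderRel {X : Type*} (r : X → X → Prop) : Prop :=
  (∀ x, r x x) ∧ (∀ x y, r x y → r y x → x = y) ∧ (∀ x y z, r x y → r y z → r x z)

/-- `r'` extends `r`. -/
def RelExtends {X : Type*} (r r' : X → X → Prop) : Prop :=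
  ∀ x y, r x y → r' x y

/-- `r` is total: any two elements are comparable. -/
def TotalRel {X : Type*} (r : X → X → Prop) : Prop :=
  ∀ x y, r x y ∨ r y x

/-- `r'` is a linear extension of `r`: a total partial order extending `r`. -/
def IsLinearExtension {X : Type*} (r r' : X → X → Prop) : Prop :=
  IsPartialOrderRel r' ∧ TotalRel r' ∧ RelExtends r r'

/-- `x` and `y` are incomparable with respect to `r`. -/
def Incomp {X : Type*} (r : X → X → Prop) (x y : X) : Prop :=
  ¬ r x y ∧ ¬ r y x

/-- `D` is Debreu dense for `r`. -/
def DebreuDense {X : Type*} (r : X → X → Prop) (D : Set X) : Prop :=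
  ∀ x y, r x y → ¬ r y x → ∃ d ∈ D, r x d ∧ r d y

/-- `(X, r)` is Debreu separable: it has a countable Debreu dense subset. -/
def DebreuSeparable {X : Type*} (r : X → X → Prop) : Prop :=
  ∃ D : Set X, D.Countable ∧ DebreuDense r D

/-- The limit of a sequence of binary relations. -/
def LimitRel {X : Type*} (r : ℕ → X → X → Prop) : X → X → Prop :=
  fun x y => ∃ n₀ : ℕ, ∀ n, n₀ ≤ n → r n x y

namespace AntichainExt

variable {X : Type*}

def SJump (r : X → X → Prop) (A : Set X) (rA : A → A → Prop) (D : Set A) (x y : X) : Prop :=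
  r x y ∨ ∃ a b d : A, d ∈ D ∧ rA a d ∧ rA d b ∧ r x (a : X) ∧ r (b : X) y

section Basic

variable {r : X → X → Prop} {A : Set X} {rA : A → A → Prop} {D : Set A}

lemma coe_eq (hr : IsPartialOrderRel r)
    (hA : ∀ x ∈ A, ∀ y ∈ A, x ≠ y → Incomp r x y)
    {a b : A} (h : r (a : X) (b : X)) : a = b := by
  by_cases hab : (a : X) = (b : X)
  · exact Subtype.ext hab
  · exact absurd h (hA a a.2 b b.2 hab).1

lemma sjump_refl (hr : IsPartialOrderRel r) (x : X) : SJump r A rA D x x :=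
  Or.inl (hr.1 x)

lemma sjump_of_rA (hr : IsPartialOrderRel r) (hrA : IsPartialOrderRel rA)
    (hD : DebreuDense rA D) {a b : A} (h : rA a b) :
    SJump r A rA D (a : X) (b : X) := by
  by_cases hab : a = b
  · subst hab; exact Or.inl (hr.1 _)
  · have hba : ¬ rA b a := fun h' => hab (hrA.2.1 a b h h')
    obtain ⟨d, hdD, had, hdb⟩ := hD a b h hba
    exact Or.inr ⟨a, b, d, hdD, had, hdb, hr.1 _, hr.1 _⟩

lemma sjump_trans (hr : IsPartialOrderRel r)
    (hA : ∀ x ∈ A, ∀ y ∈ A, x ≠ y → Incomp r x y)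
    (hrA : IsPartialOrderRel rA)
    {x y z : X} (hxy : SJump r A rA D x y) (hyz : SJump r A rA D y z) :
    SJump r A rA D x z := by
  rcases hxy with hxy | ⟨a1, b1, d1, hd1, h1, h2, h3, h4⟩
  · rcases hyz with hyz | ⟨a2, b2, d2, hd2, g1, g2, g3, g4⟩
    · exact Or.inl (hr.2.2 _ _ _ hxy hyz)
    · exact Or.inr ⟨a2, b2, d2, hd2, g1, g2, hr.2.2 _ _ _ hxy g3, g4⟩
  · rcases hyz with hyz | ⟨a2, b2, d2, hd2, g1, g2, g3, g4⟩
    · exact Or.inr ⟨a1, b1, d1, hd1, h1, h2, h3, hr.2.2 _ _ _ h4 hyz⟩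
    · have hba : (b1 : A) = a2 := coe_eq hr hA (hr.2.2 _ _ _ h4 g3)
      refine Or.inr ⟨a1, b2, d1, hd1, h1, ?_, h3, g4⟩
      exact hrA.2.2 _ _ _ (hba ▸ h2) (hrA.2.2 _ _ _ g1 g2)

lemma sjump_antisymm (hr : IsPartialOrderRel r)
    (hA : ∀ x ∈ A, ∀ y ∈ A, x ≠ y → Incomp r x y)
    (hrA : IsPartialOrderRel rA)
    {x y : X} (hxy : SJump r A rA D x y) (hyx : SJump r A rA D y x) :
    x = y := by
  rcases hxy with hxy | ⟨a1, b1, d1, hd1, h1, h2, h3, h4⟩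
  · rcases hyx with hyx | ⟨a2, b2, d2, hd2, g1, g2, g3, g4⟩
    · exact hr.2.1 _ _ hxy hyx
    · have hba : (b2 : A) = a2 :=
        coe_eq hr hA (hr.2.2 _ _ _ g4 (hr.2.2 _ _ _ hxy g3))
      have hax : r (a2 : X) x := by rw [← hba]; exact g4
      exact hr.2.1 _ _ hxy (hr.2.2 _ _ _ g3 hax)
  · rcases hyx with hyx | ⟨a2, b2, d2, hd2, g1, g2, g3, g4⟩
    · have hba : (b1 : A) = a1 :=
        coe_eq hr hA (hr.2.2 _ _ _ h4 (hr.2.2 _ _ _ hyx h3))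
      have hax : r (a1 : X) y := by rw [← hba]; exact h4
      exact (hr.2.1 _ _ hyx (hr.2.2 _ _ _ h3 hax)).symm
    · have hb1a2 : (b1 : A) = a2 := coe_eq hr hA (hr.2.2 _ _ _ h4 g3)
      have hb2a1 : (b2 : A) = a1 := coe_eq hr hA (hr.2.2 _ _ _ g4 h3)
      have e1 : rA a1 b1 := hrA.2.2 _ _ _ h1 h2
      have e2 : rA b1 a1 := by
        have h' : rA a2 b2 := hrA.2.2 _ _ _ g1 g2
        rw [hb2a1] at h'; rw [hb1a2]; exact h'
      have eab : (a1 : A) = b1 := hrA.2.1 _ _ e1 e2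
      have hxa : x = (a1 : X) := by
        have g4' : r (a1 : X) x := by rw [← hb2a1]; exact g4
        exact hr.2.1 _ _ h3 g4'
      have hyb : y = (b1 : X) := by
        have g3' : r y (b1 : X) := by rw [hb1a2]; exact g3
        exact (hr.2.1 _ _ h4 g3').symm
      rw [hxa, hyb, eab]


end Basic

/-- Index type for the countable separating family of `SJump`-increasing sets. -/
def SIdx {X : Type*} {A : Set X} (D : Set A) : Type _ :=
  (ℚ ⊕ ℚ) ⊕ ((D ⊕ D) ⊕ (D ⊕ D))

/-- The separating family of `SJump`-increasing sets (as predicates). -/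
def sind (u : X → ℝ) (r : X → X → Prop) (A : Set X) (rA : A → A → Prop) (D : Set A) :
    SIdx D → X → Prop
  | .inl (.inl q), x => ∃ z, (q : ℝ) < u z ∧ SJump r A rA D z x
  | .inl (.inr q), x => ∀ w, SJump r A rA D x w → (q : ℝ) < u w
  | .inr (.inl (.inl d)), x => ∃ b : A, rA d.1 b ∧ r (b : X) x
  | .inr (.inl (.inr d)), x => ∃ b : A, rA d.1 b ∧ ¬ rA b d.1 ∧ r (b : X) x
  | .inr (.inr (.inl d)), x => ¬ ∃ a : A, rA a d.1 ∧ r x (a : X)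
  | .inr (.inr (.inr d)), x => ¬ ∃ a : A, rA a d.1 ∧ ¬ rA d.1 a ∧ r x (a : X)

section Fam

variable {u : X → ℝ} {r : X → X → Prop} {A : Set X} {rA : A → A → Prop} {D : Set A}

lemma sind_mono (hr : IsPartialOrderRel r)
    (hA : ∀ x ∈ A, ∀ y ∈ A, x ≠ y → Incomp r x y)
    (hrA : IsPartialOrderRel rA)
    (i : SIdx D) {x y : X} (hxy : SJump r A rA D x y)
    (hx : sind u r A rA D i x) : sind u r A rA D i y := by
  match i with
  | .inl (.inl q) =>
    obtain ⟨z, hz, hzx⟩ := hx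
    exact ⟨z, hz, sjump_trans hr hA hrA hzx hxy⟩
  | .inl (.inr q) =>
    intro w hw
    exact hx w (sjump_trans hr hA hrA hxy hw)
  | .inr (.inl (.inl d)) =>
    obtain ⟨b, hdb, hbx⟩ := hx
    rcases hxy with hxy | ⟨a3, b3, d3, hd3, k1, k2, k3, k4⟩
    · exact ⟨b, hdb, hr.2.2 _ _ _ hbx hxy⟩
    · have hba : (b : A) = a3 := coe_eq hr hA (hr.2.2 _ _ _ hbx k3)
      exact ⟨b3, hrA.2.2 _ _ _ hdb (hba ▸ hrA.2.2 _ _ _ k1 k2), k4⟩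
  | .inr (.inl (.inr d)) =>
    obtain ⟨b, hdb, hnbd, hbx⟩ := hx
    rcases hxy with hxy | ⟨a3, b3, d3, hd3, k1, k2, k3, k4⟩
    · exact ⟨b, hdb, hnbd, hr.2.2 _ _ _ hbx hxy⟩
    · have hba : (b : A) = a3 := coe_eq hr hA (hr.2.2 _ _ _ hbx k3)
      refine ⟨b3, hrA.2.2 _ _ _ hdb (hba ▸ hrA.2.2 _ _ _ k1 k2), ?_, k4⟩
      intro hb3d
      exact hnbd (hrA.2.2 _ _ _ (hba ▸ hrA.2.2 _ _ _ k1 k2) hb3d)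
  | .inr (.inr (.inl d)) =>
    intro ⟨a', h1, h2⟩
    rcases hxy with hxy | ⟨a3, b3, d3, hd3, k1, k2, k3, k4⟩
    · exact hx ⟨a', h1, hr.2.2 _ _ _ hxy h2⟩
    · have hba : (b3 : A) = a' := coe_eq hr hA (hr.2.2 _ _ _ k4 h2)
      exact hx ⟨a3, hrA.2.2 _ _ _ (hrA.2.2 _ _ _ k1 k2) (hba ▸ h1), k3⟩
  | .inr (.inr (.inr d)) =>
    intro ⟨a', h1, h1', h2⟩
    rcases hxy with hxy | ⟨a3, b3, d3, hd3, k1, k2, k3, k4⟩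
    · exact hx ⟨a', h1, h1', hr.2.2 _ _ _ hxy h2⟩
    · have hba : (b3 : A) = a' := coe_eq hr hA (hr.2.2 _ _ _ k4 h2)
      refine hx ⟨a3, hrA.2.2 _ _ _ (hrA.2.2 _ _ _ k1 k2) (hba ▸ h1), ?_, k3⟩
      intro hda3
      exact h1' (hba ▸ (hrA.2.2 _ _ _ (hrA.2.2 _ _ _ hda3 k1) k2))

end Fam

section Sep

variable {u : X → ℝ} {r : X → X → Prop} {A : Set X} {rA : A → A → Prop} {D : Set A}

lemma sind_sep_aux (hr : IsPartialOrderRel r)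
    (hu : ∀ x y, r x y → u x ≤ u y)
    (hA : ∀ x ∈ A, ∀ y ∈ A, x ≠ y → Incomp r x y)
    (hrA : IsPartialOrderRel rA) (hrAtot : TotalRel rA)
    (hD : DebreuDense rA D)
    {x y : X} (hxy : ∀ i : SIdx D, sind u r A rA D i x ↔ sind u r A rA D i y)
    (hlt : u x < u y) : False := by
  obtain ⟨q, hq1, hq2⟩ := exists_rat_btwn hlt
  -- step 1 : x is in the up-closure of {u > q}
  have hyP : sind u r A rA D (.inl (.inl q)) y := ⟨y, hq2, sjump_refl hr y⟩
  obtain ⟨z, hz, hzx⟩ := (hxy (.inl (.inl q))).2 hyP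
  rcases hzx with hzx | ⟨a, b, d1, hd1, ha_d1, hd1_b, hza, hbx⟩
  · exact absurd (lt_of_lt_of_le hz (hu _ _ hzx)) (not_lt.2 hq1.le)
  -- step 2 : y fails the Q-set
  have hxQ : ¬ sind u r A rA D (.inl (.inr q)) x := by
    intro h
    exact absurd (h x (sjump_refl hr x)) (not_lt.2 hq1.le)
  have hyQ : ¬ sind u r A rA D (.inl (.inr q)) y := fun h => hxQ ((hxy _).2 h)
  rw [show (sind u r A rA D (.inl (.inr q)) y) = ∀ w, SJump r A rA D y w → (q:ℝ) < u w
      from rfl] at hyQ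
  push_neg at hyQ
  obtain ⟨w, hyw, hw⟩ := hyQ
  rcases hyw with hyw | ⟨c, e, d2, hd2, hc_d2, hd2_e, hyc, hew⟩
  · exact absurd (lt_of_lt_of_le hq2 (hu _ _ hyw)) (not_lt.2 hw)
  -- step 3 : transfer χ_{d1} from x to y : get y = ↑c and rA d1 c
  have hxchi : sind u r A rA D (.inr (.inl (.inl ⟨d1, hd1⟩))) x := ⟨b, hd1_b, hbx⟩
  obtain ⟨b', hb'1, hb'2⟩ := (hxy _).1 hxchi
  have hb'c : (b' : A) = c := coe_eq hr hA (hr.2.2 _ _ _ hb'2 hyc)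
  have hyeq : y = (c : X) := by
    have : r (c : X) y := by rw [← hb'c]; exact hb'2
    exact hr.2.1 _ _ hyc this
  have hd1c : rA d1 c := hb'c ▸ hb'1
  -- step 4 : transfer μ_{d2} from y to x : get x = ↑b and rA b d2
  have hymu : ¬ sind u r A rA D (.inr (.inr (.inl ⟨d2, hd2⟩))) y := by
    intro h; exact h ⟨c, hc_d2, hyc⟩
  have hxmu : ¬ sind u r A rA D (.inr (.inr (.inl ⟨d2, hd2⟩))) x :=
    fun h => hymu ((hxy _).1 h)
  have hxw : ∃ a' : A, rA a' d2 ∧ r x (a' : X) := by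
    by_contra h; exact hxmu h
  obtain ⟨a', ha'1, ha'2⟩ := hxw
  have hba' : (b : A) = a' := coe_eq hr hA (hr.2.2 _ _ _ hbx ha'2)
  have hxeq : x = (b : X) := by
    have : r x (b : X) := by rw [hba']; exact ha'2
    exact hr.2.1 _ _ this hbx
  have hbd2 : rA b d2 := by rw [hba']; exact ha'1
  -- now x = ↑b, y = ↑c, b ≠ c
  have hbc_ne : (b : A) ≠ c := by
    intro h
    rw [hxeq, hyeq, h] at hlt
    exact lt_irrefl _ hlt
  rcases hrAtot b c with hbc | hcb
  · -- b ≺A c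
    have hncb : ¬ rA c b := fun h => hbc_ne (hrA.2.1 _ _ hbc h)
    obtain ⟨ds, hdsD, hbds, hdsc⟩ := hD b c hbc hncb
    by_cases hdsb : rA ds b
    · have hbds_eq : (b : A) = ds := hrA.2.1 _ _ hbds hdsb
      have hy' : sind u r A rA D (.inr (.inl (.inr ⟨ds, hdsD⟩))) y :=
        ⟨c, hdsc, fun h => hncb (hbds_eq ▸ h), by rw [hyeq]; exact hr.1 _⟩
      obtain ⟨b'', p1, p2, p3⟩ := (hxy _).2 hy'
      have : (b'' : A) = b := coe_eq hr hA (by rw [← hxeq]; exact p3)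
      exact p2 (by rw [this, hbds_eq]; exact hrA.1 _)
    · have hx' : ¬ sind u r A rA D (.inr (.inr (.inr ⟨ds, hdsD⟩))) x := by
        intro h
        exact h ⟨b, hbds, hdsb, by rw [← hxeq]; exact hr.1 _⟩
      have hy' : ¬ sind u r A rA D (.inr (.inr (.inr ⟨ds, hdsD⟩))) y :=
        fun h => hx' ((hxy _).2 h)
      apply hy'
      intro ⟨a'', q1, q2, q3⟩
      have : (c : A) = a'' := coe_eq hr hA (by rw [← hyeq]; exact q3)
      exact q2 (this ▸ hdsc)
  · -- c ≺A b
    have hnbc : ¬ rA b c := fun h => hbc_ne (hrA.2.1 _ _ h hcb)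
    obtain ⟨ds, hdsD, hcds, hdsb⟩ := hD c b hcb (fun h => hbc_ne (hrA.2.1 _ _ h hcb))
    by_cases hdsc : rA ds c
    · have hcds_eq : (c : A) = ds := hrA.2.1 _ _ hcds hdsc
      have hx' : sind u r A rA D (.inr (.inl (.inr ⟨ds, hdsD⟩))) x :=
        ⟨b, hdsb, fun h => hnbc (hcds_eq ▸ h), by rw [hxeq]; exact hr.1 _⟩
      obtain ⟨b'', p1, p2, p3⟩ := (hxy _).1 hx'
      have : (b'' : A) = c := coe_eq hr hA (by rw [← hyeq]; exact p3)
      exact p2 (by rw [this, hcds_eq]; exact hrA.1 _)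
    · have hy' : ¬ sind u r A rA D (.inr (.inr (.inr ⟨ds, hdsD⟩))) y := by
        intro h
        exact h ⟨c, hcds, hdsc, by rw [← hyeq]; exact hr.1 _⟩
      have hx' : ¬ sind u r A rA D (.inr (.inr (.inr ⟨ds, hdsD⟩))) x :=
        fun h => hy' ((hxy _).1 h)
      apply hx'
      intro ⟨a'', q1, q2, q3⟩
      have hba'' : (b : A) = a'' := coe_eq hr hA (by rw [← hxeq]; exact q3)
      have : rA ds b := hdsb
      have hbds_eq : (b : A) = ds := hrA.2.1 _ _ (hba'' ▸ q1) this
      refine q2 ?_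
      show rA ds a''
      rw [← hbds_eq, hba'']
      exact hrA.1 _

lemma sind_sep (hr : IsPartialOrderRel r)
    (hu : ∀ x y, r x y → u x ≤ u y) (huinj : Function.Injective u)
    (hA : ∀ x ∈ A, ∀ y ∈ A, x ≠ y → Incomp r x y)
    (hrA : IsPartialOrderRel rA) (hrAtot : TotalRel rA)
    (hD : DebreuDense rA D)
    {x y : X} (hxy : ∀ i : SIdx D, sind u r A rA D i x ↔ sind u r A rA D i y) :
    x = y := by
  by_contra hne
  rcases lt_trichotomy (u x) (u y) with h | h | h
  · exact sind_sep_aux hr hu hA hrA hrAtot hD hxy h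
  · exact hne (huinj h)
  · exact sind_sep_aux hr hu hA hrA hrAtot hD (fun i => (hxy i).symm) h

end Sep

section F

open scoped Classical

/-- The separating monotone function. -/
noncomputable def sf (u : X → ℝ) (r : X → X → Prop) (A : Set X) (rA : A → A → Prop)
    (D : Set A) (enc : SIdx D → ℕ) (x : X) : ℝ :=
  ∑' i : SIdx D, if sind u r A rA D i x then ((1:ℝ)/3) ^ (enc i) else 0

variable {u : X → ℝ} {r : X → X → Prop} {A : Set X} {rA : A → A → Prop} {D : Set A}
  {enc : SIdx D → ℕ}

lemma sf_term_summable (henc : Function.Injective enc) (x : X) :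
    Summable (fun i : SIdx D =>
      if sind u r A rA D i x then ((1:ℝ)/3) ^ (enc i) else 0) := by
  have hgeo : Summable (fun n : ℕ => ((1:ℝ)/3) ^ n) :=
    summable_geometric_of_lt_one (by norm_num) (by norm_num)
  have hcomp : Summable (fun i : SIdx D => ((1:ℝ)/3) ^ (enc i)) :=
    hgeo.comp_injective henc
  refine Summable.of_nonneg_of_le (fun i => ?_) (fun i => ?_) hcomp
  · split
    · positivity
    · exact le_rfl
  · split
    · exact le_rfl
    · positivity

lemma sf_mono (hr : IsPartialOrderRel r)
    (hA : ∀ x ∈ A, ∀ y ∈ A, x ≠ y → Incomp r x y)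
    (hrA : IsPartialOrderRel rA)
    (henc : Function.Injective enc)
    {x y : X} (hxy : SJump r A rA D x y) :
    sf u r A rA D enc x ≤ sf u r A rA D enc y := by
  refine Summable.tsum_le_tsum (fun i => ?_) (sf_term_summable henc x) (sf_term_summable henc y)
  by_cases hx : sind u r A rA D i x
  · rw [if_pos hx, if_pos (sind_mono hr hA hrA i hxy hx)]
  · rw [if_neg hx]
    split
    · positivity
    · exact le_rfl

lemma sf_inj (hr : IsPartialOrderRel r)
    (hu : ∀ x y, r x y → u x ≤ u y) (huinj : Function.Injective u)
    (hA : ∀ x ∈ A, ∀ y ∈ A, x ≠ y → Incomp r x y)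
    (hrA : IsPartialOrderRel rA) (hrAtot : TotalRel rA)
    (hD : DebreuDense rA D)
    (henc : Function.Injective enc) :
    Function.Injective (sf u r A rA D enc) := by
  intro x y hfeq
  refine sind_sep hr hu huinj hA hrA hrAtot hD (fun i => ?_)
  by_contra hdiff
  have hNe : ∃ n : ℕ, ∃ i : SIdx D, enc i = n ∧
      ¬ (sind u r A rA D i x ↔ sind u r A rA D i y) := ⟨enc i, i, rfl, hdiff⟩
  set n0 := Nat.find hNe with hn0
  obtain ⟨i0, henc0, hdiff0⟩ := Nat.find_spec hNe
  have hmin : ∀ j : SIdx D, enc j < n0 → (sind u r A rA D j x ↔ sind u r A rA D j y) := by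
    intro j hj
    by_contra hj'
    exact absurd ⟨j, rfl, hj'⟩ (Nat.find_min hNe hj)
  set ix : SIdx D → ℝ := fun i => if sind u r A rA D i x then ((1:ℝ)/3) ^ (enc i) else 0
    with hix
  set iy : SIdx D → ℝ := fun i => if sind u r A rA D i y then ((1:ℝ)/3) ^ (enc i) else 0
    with hiy
  have hsx : Summable ix := sf_term_summable henc x
  have hsy : Summable iy := sf_term_summable henc y
  set g : SIdx D → ℝ := fun i => ix i - iy i with hg
  have hsg : Summable g := hsx.sub hsy
  have hgsum : ∑' i, g i = 0 := by
    have h1 : ∑' i, g i = (∑' i, ix i) - (∑' i, iy i) := Summable.tsum_sub hsx hsy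
    have h2 : sf u r A rA D enc x = ∑' i, ix i := rfl
    have h3 : sf u r A rA D enc y = ∑' i, iy i := rfl
    rw [h1, ← h2, ← h3, hfeq, sub_self]
  have hgi0 : |g i0| = ((1:ℝ)/3) ^ n0 := by
    by_cases hx0 : sind u r A rA D i0 x
    · have hy0 : ¬ sind u r A rA D i0 y := fun h => hdiff0 ⟨fun _ => h, fun _ => hx0⟩
      simp only [hg, hix, hiy, if_pos hx0, if_neg hy0, sub_zero, henc0]
      rw [abs_of_pos (by positivity)]
    · have hy0 : sind u r A rA D i0 y := by
        by_contra hy0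
        exact hdiff0 ⟨fun h => absurd h hx0, fun h => absurd h hy0⟩
      simp only [hg, hix, hiy, if_neg hx0, if_pos hy0, zero_sub, abs_neg, henc0]
      rw [abs_of_pos (by positivity)]
  have hsplit : ∑' i, g i = g i0 + ∑' i, if i = i0 then 0 else g i :=
    Summable.tsum_eq_add_tsum_ite hsg i0
  set H : ℕ → ℝ := fun n => if n ≤ n0 then 0 else ((1:ℝ)/3) ^ n with hH
  have hHnn : ∀ n, 0 ≤ H n := by
    intro n; simp only [hH]; split
    · exact le_rfl
    · positivity
  have hHs : Summable H := by
    refine Summable.of_nonneg_of_le hHnn (fun n => ?_)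
      (summable_geometric_of_lt_one (r := (1:ℝ)/3) (by norm_num) (by norm_num))
    simp only [hH]; split
    · positivity
    · exact le_rfl
  have hbound : ∀ i : SIdx D, |if i = i0 then 0 else g i| ≤ H (enc i) := by
    intro i
    by_cases hii : i = i0
    · rw [if_pos hii, abs_zero]
      exact hHnn _
    · rw [if_neg hii]
      by_cases hle : enc i ≤ n0
      · have hlt : enc i < n0 := lt_of_le_of_ne hle (fun h => hii (henc (h.trans henc0.symm)))
        have hiff := hmin i hlt
        have hg0 : g i = 0 := by
          simp only [hg, hix, hiy]
          by_cases hxi : sind u r A rA D i x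
          · rw [if_pos hxi, if_pos (hiff.1 hxi), sub_self]
          · rw [if_neg hxi, if_neg (fun h => hxi (hiff.2 h)), sub_self]
        rw [hg0, abs_zero]
        exact hHnn _
      · simp only [hH, if_neg hle]
        have hxi : 0 ≤ ix i ∧ ix i ≤ ((1:ℝ)/3) ^ (enc i) := by
          simp only [hix]; constructor <;> [skip; skip] <;> split
          · positivity
          · exact le_rfl
          · exact le_rfl
          · positivity
        have hyi : 0 ≤ iy i ∧ iy i ≤ ((1:ℝ)/3) ^ (enc i) := by
          simp only [hiy]; constructor <;> [skip; skip] <;> split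
          · positivity
          · exact le_rfl
          · exact le_rfl
          · positivity
        rw [abs_sub_le_iff]
        constructor
        · linarith [hxi.2, hyi.1]
        · linarith [hyi.2, hxi.1]
  have habs_summ : Summable (fun i : SIdx D => |if i = i0 then 0 else g i|) := by
    refine Summable.of_nonneg_of_le (fun i => abs_nonneg _) hbound ?_
    exact hHs.comp_injective henc
  have hrest : |∑' i, if i = i0 then 0 else g i| ≤ ∑' i : SIdx D, H (enc i) := by
    calc |∑' i, if i = i0 then 0 else g i|
        ≤ ∑' i, |if i = i0 then 0 else g i| := by
          simpa [Real.norm_eq_abs] using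
            norm_tsum_le_tsum_norm (f := fun i : SIdx D => if i = i0 then 0 else g i)
              (by simpa [Real.norm_eq_abs] using habs_summ)
      _ ≤ ∑' i : SIdx D, H (enc i) :=
          Summable.tsum_le_tsum hbound habs_summ (hHs.comp_injective henc)
  have hcomp_le : ∑' i : SIdx D, H (enc i) ≤ ∑' n, H n :=
    tsum_comp_le_tsum_of_inj hHs hHnn henc
  have hHval : ∑' n, H n = ((1:ℝ)/3) ^ n0 / 2 := by
    have hsplit2 := Summable.sum_add_tsum_nat_add (f := H) (n0 + 1) hHs
    have hzero : (∑ i ∈ Finset.range (n0 + 1), H i) = 0 := by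
      refine Finset.sum_eq_zero (fun i hi => ?_)
      simp only [hH]
      rw [if_pos (Nat.lt_succ_iff.1 (Finset.mem_range.1 hi))]
    have htail : ∀ i : ℕ, H (i + (n0 + 1)) = ((1:ℝ)/3) ^ (n0 + 1) * ((1:ℝ)/3) ^ i := by
      intro i
      simp only [hH]
      rw [if_neg (by omega), pow_add, mul_comm]
    rw [← hsplit2, hzero, zero_add]
    rw [tsum_congr htail, tsum_mul_left,
      tsum_geometric_of_lt_one (by norm_num) (by norm_num)]
    rw [pow_succ]
    norm_num
    ring
  have hfinal : ((1:ℝ)/3) ^ n0 ≤ ((1:ℝ)/3) ^ n0 / 2 := by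
    have h0 : g i0 = - ∑' i, if i = i0 then 0 else g i := by
      have := hsplit.symm.trans hgsum
      linarith
    calc ((1:ℝ)/3) ^ n0 = |g i0| := hgi0.symm
      _ = |∑' i, if i = i0 then 0 else g i| := by rw [h0, abs_neg]
      _ ≤ ∑' i : SIdx D, H (enc i) := hrest
      _ ≤ ∑' n, H n := hcomp_le
      _ = ((1:ℝ)/3) ^ n0 / 2 := hHval
  have : (0:ℝ) < ((1:ℝ)/3) ^ n0 := by positivity
  linarith

end F


section RealOrder

variable {X : Type*}

open Classical in
/-- The order on `X` induced by an injective real-valued function is Debreu separable. -/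
lemma debreuSeparable_of_inj (f : X → ℝ) (hf : Function.Injective f) :
    DebreuSeparable (fun x y : X => f x < f y ∨ x = y) := by
  classical
  set S1 : Set X := ⋃ pq : ℚ × ℚ,
    if h : ∃ x, ((pq.1 : ℝ) < f x ∧ f x < (pq.2 : ℝ)) then {h.choose} else ∅ with hS1
  set S2 : Set X := {x | ∃ y, f x < f y ∧ ∀ t, ¬ (f x < f t ∧ f t < f y)} with hS2
  have hS1c : S1.Countable := by
    refine Set.countable_iUnion (fun pq => ?_)
    split_ifs
    · exact Set.countable_singleton _
    · exact Set.countable_empty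
  have hS2c : S2.Countable := by
    rw [← Set.countable_coe_iff]
    have hY : ∀ x : S2, ∃ y : X, f (x : X) < f y ∧ ∀ t, ¬ (f (x : X) < f t ∧ f t < f y) :=
      fun x => x.2
    choose Y hY1 hY2 using hY
    have hq : ∀ x : S2, ∃ q : ℚ, f (x : X) < (q : ℝ) ∧ (q : ℝ) < f (Y x) :=
      fun x => exists_rat_btwn (hY1 x)
    choose qf hq1 hq2 using hq
    refine Function.Injective.countable (f := qf) (fun x1 x2 hq12 => ?_)
    rcases lt_trichotomy (f (x1 : X)) (f (x2 : X)) with hlt | heq | hgt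
    · exact absurd ⟨hlt, lt_trans (by rw [hq12]; exact hq1 x2) (hq2 x1)⟩ (hY2 x1 x2)
    · exact Subtype.ext (hf heq)
    · exact absurd ⟨hgt, lt_trans (by rw [← hq12]; exact hq1 x1) (hq2 x2)⟩ (hY2 x2 x1)
  refine ⟨S1 ∪ S2, hS1c.union hS2c, fun x y hxy hnyx => ?_⟩
  have hne : ¬ (f y < f x) ∧ y ≠ x := by
    constructor
    · exact fun h => hnyx (Or.inl h)
    · exact fun h => hnyx (Or.inr h)
  have hlt : f x < f y := by
    rcases hxy with h | h
    · exact h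
    · exact absurd h.symm hne.2
  by_cases hex : ∃ t, f x < f t ∧ f t < f y
  · obtain ⟨t, ht1, ht2⟩ := hex
    obtain ⟨p, hp1, hp2⟩ := exists_rat_btwn ht1
    obtain ⟨q', hq1', hq2'⟩ := exists_rat_btwn ht2
    have hmem : ∃ z, ((p : ℝ) < f z ∧ f z < ((q' : ℝ))) := ⟨t, hp2, hq1'⟩
    refine ⟨hmem.choose, Or.inl ?_, Or.inl ?_, Or.inl ?_⟩
    · refine Set.mem_iUnion.2 ⟨(p, q'), ?_⟩
      rw [dif_pos hmem]
      exact rfl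
    · exact hp1.trans hmem.choose_spec.1
    · exact hmem.choose_spec.2.trans hq2'
  · refine ⟨x, Or.inr ⟨y, hlt, fun t ht => hex ⟨t, ht⟩⟩, Or.inr rfl, Or.inl hlt⟩

end RealOrder

end AntichainExt


open AntichainExt in
theorem antichain_extension_debreuSeparable {X : Type*}
    (r : X → X → Prop) (hr : IsPartialOrderRel r)
    (hinj : ∃ u : X → ℝ, (∀ x y, r x y → u x ≤ u y) ∧ Function.Injective u)
    (A : Set X) (hA : ∀ x ∈ A, ∀ y ∈ A, x ≠ y → Incomp r x y)
    (rA : A → A → Prop) (hrA : IsPartialOrderRel rA) (hrAtot : TotalRel rA)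
    (hrAsep : DebreuSeparable rA) :
    ∃ r'' : X → X → Prop,
      IsPartialOrderRel r'' ∧ TotalRel r'' ∧ DebreuSeparable r'' ∧
      (∀ x y, r x y → r'' x y) ∧
      (∀ a b : A, rA a b → r'' (a : X) (b : X)) := by
  obtain ⟨u, hu, huinj⟩ := hinj
  obtain ⟨D, hDc, hDd⟩ := hrAsep
  haveI hcntD : Countable D := hDc.to_subtype
  haveI : Countable (SIdx D) :=
    inferInstanceAs (Countable ((ℚ ⊕ ℚ) ⊕ ((↥D ⊕ ↥D) ⊕ (↥D ⊕ ↥D))))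
  obtain ⟨enc, henc⟩ := Countable.exists_injective_nat (SIdx D)
  set f : X → ℝ := sf u r A rA D enc with hf
  have hfinj : Function.Injective f := sf_inj hr hu huinj hA hrA hrAtot hDd henc
  have hfmono : ∀ {x y : X}, SJump r A rA D x y → f x ≤ f y :=
    fun h => sf_mono hr hA hrA henc h
  refine ⟨fun x y => f x < f y ∨ x = y, ⟨?_, ?_, ?_⟩, ?_, ?_, ?_, ?_⟩
  · exact fun x => Or.inr rfl
  · rintro x y (h1 | h1) (h2 | h2)
    · exact absurd h2 (lt_asymm h1)
    · exact h2.symm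
    · exact h1
    · exact h1
  · rintro x y z (h1 | h1) (h2 | h2)
    · exact Or.inl (h1.trans h2)
    · exact Or.inl (h2 ▸ h1)
    · exact Or.inl (h1 ▸ h2)
    · exact Or.inr (h1.trans h2)
  · intro x y
    rcases lt_trichotomy (f x) (f y) with h | h | h
    · exact Or.inl (Or.inl h)
    · exact Or.inl (Or.inr (hfinj h))
    · exact Or.inr (Or.inl h)
  · exact debreuSeparable_of_inj f hfinj
  · intro x y hxy
    by_cases hne : x = y
    · exact Or.inr hne
    · exact Or.inl (lt_of_le_of_ne (hfmono (Or.inl hxy)) (fun he => hne (hfinj he)))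
  · intro a b hab
    by_cases hne : a = b
    · exact Or.inr (by rw [hne])
    · refine Or.inl (lt_of_le_of_ne (hfmono (sjump_of_rA hr hrA hDd hab)) ?_)
      intro he
      exact hne (Subtype.ext (congrArg Subtype.val (Subtype.ext (hfinj he) : (⟨(a:X), a.2⟩ : A) = ⟨(b:X), b.2⟩)))
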